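/- arXiv:1101.3034 — 2 statements merged into one kernel-verified Lean document; each statement's English description precedes it below -/
import Mathlib

section
/- Let V, V₁ : 𝕋 → M_{n×n}(ℂ) be measurable essentially bounded functions such that for a.e. z ∈ 𝕋, V(z) is a partial isometry with initial space N and V₁(z) is a partial isometry with initial space N₁, where N, N₁ are linear subspaces of ℂⁿ. If V·H²(N) = V₁·H²(N₁) as subspaces of L²(𝕋, ℂⁿ), then there exists a constant partial isometry W ∈ M_{n×n}(ℂ) with initial space N₁ and final space N such that V₁(z) = V(z)·W for a.e. z ∈ 𝕋. -/
open MeasureTheory Complex ContinuousLinearMap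
open scoped ComplexConjugate ENNReal NNReal

noncomputable section

/-! Basic setup: the unit circle `𝕋 = Circle ⊆ ℂ` with its Borel σ-algebra and its
normalized arc-length (Haar) probability measure `μc`; the spaces `L²(𝕋, ℂⁿ)` and the
Hardy spaces `H²(ℂⁿ)`; shifts, matrix- (i.e. operator-) valued functions on the circle,
their Fourier coefficients, inner functions and analytic extensions into the unit disk. -/

instance : MeasurableSpace Circle := borel Circle
instance : BorelSpace Circle := ⟨rfl⟩
instance : Fact (0 < 2 * Real.pi) := ⟨by positivity⟩

/-- The normalized arc-length (Haar) probability measure on the unit circle `𝕋`. -/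
def μc : Measure Circle :=
  Measure.map AddCircle.homeomorphCircle' AddCircle.haarAddCircle

/-- `ℂⁿ` as a (finite dimensional) Hilbert space. -/
abbrev Cn (n : ℕ) := EuclideanSpace ℂ (Fin n)

/-- `L²(𝕋, ℂⁿ)`. -/
abbrev L2 (n : ℕ) := Lp (Cn n) 2 μc

/-- The `k`-th Fourier coefficient `f̂(k) = ∫_𝕋 f(z) z̄ᵏ dμ` of a `ℂⁿ`-valued function. -/
def fc {n : ℕ} (f : Circle → Cn n) (k : ℤ) : Cn n :=
  ∫ z, ((starRingEnd ℂ) (z : ℂ)) ^ k • f z ∂μc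

/-- The Hardy space `H²(ℂⁿ)`, as a subset of `L²(𝕋, ℂⁿ)`: those `f` whose Fourier
coefficients `f̂(k)` vanish for all `k < 0`. -/
def H2 (n : ℕ) : Set (L2 n) :=
  {f | ∀ k : ℤ, k < 0 → fc (f : Circle → Cn n) k = 0}

/-- A set `M ⊆ L²(𝕋, ℂⁿ)` is invariant under the shift `U` (multiplication by the
coordinate function `z`): for every `f ∈ M`, the element `U f` (i.e. the element of `L²`
represented by `z ↦ z • f(z)`) again belongs to `M`. -/
def ShiftInv {n : ℕ} (M : Set (L2 n)) : Prop :=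
  ∀ f ∈ M, ∃ g ∈ M, (g : Circle → Cn n) =ᵐ[μc] fun z => (z : ℂ) • (f : Circle → Cn n) z

/-- Invariance of `M ⊆ L²(𝕋, ℂⁿ)` under the adjoint `U*` of the bilateral shift,
i.e. multiplication by `z̄`. -/
def ShiftStarInv {n : ℕ} (M : Set (L2 n)) : Prop :=
  ∀ f ∈ M, ∃ g ∈ M,
    (g : Circle → Cn n) =ᵐ[μc] fun z => ((starRingEnd ℂ) (z : ℂ)) • (f : Circle → Cn n) z

/-- The image `U M` of a set `M ⊆ L²(𝕋, ℂⁿ)` under the shift (multiplication by `z`). -/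
def Sset {n : ℕ} (M : Set (L2 n)) : Set (L2 n) :=
  {g | ∃ f ∈ M, (g : Circle → Cn n) =ᵐ[μc] fun z => (z : ℂ) • (f : Circle → Cn n) z}

/-- The image `Uᵏ M` of a set `M ⊆ L²(𝕋, ℂⁿ)` under the `k`-th power of the shift
(multiplication by `zᵏ`). -/
def shiftPow {n : ℕ} (k : ℕ) (M : Set (L2 n)) : Set (L2 n) :=
  {g | ∃ f ∈ M, (g : Circle → Cn n) =ᵐ[μc] fun z => ((z : ℂ) ^ k) • (f : Circle → Cn n) z}

/-- Multiplication of a set `A ⊆ L²(𝕋, ℂᵐ)` by a matrix- (operator-) valued function `G`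
on the circle: `G·A = {G·f : f ∈ A}` inside `L²(𝕋, ℂⁿ)`. -/
def mulSet {m n : ℕ} (G : Circle → (Cn m →L[ℂ] Cn n)) (A : Set (L2 m)) : Set (L2 n) :=
  {h | ∃ f ∈ A, (h : Circle → Cn n) =ᵐ[μc] fun z => G z ((f : Circle → Cn m) z)}

/-- The `k`-th matrix Fourier coefficient `Ĝ(k) = ∫_𝕋 G(z) z̄ᵏ dμ` of a matrix-valued
function on the circle. -/
def fcM {m n : ℕ} (G : Circle → (Cn m →L[ℂ] Cn n)) (k : ℤ) : Cn m →L[ℂ] Cn n :=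
  ∫ z, ((starRingEnd ℂ) (z : ℂ)) ^ k • G z ∂μc

/-- An inner function from `ℂᵐ` to `ℂⁿ`: a measurable, essentially bounded, matrix-valued
function `G` on `𝕋` with `G(z)*G(z) = Iₘ` for a.e. `z` and all negative matrix Fourier
coefficients vanishing. -/
def IsInner {m n : ℕ} (G : Circle → (Cn m →L[ℂ] Cn n)) : Prop :=
  Measurable G ∧ (∃ C : ℝ, ∀ᵐ z ∂μc, ‖G z‖ ≤ C) ∧
    (∀ᵐ z ∂μc, (ContinuousLinearMap.adjoint (G z)).comp (G z) = ContinuousLinearMap.id ℂ (Cn m)) ∧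
    (∀ k : ℤ, k < 0 → fcM G k = 0)

/-- The analytic extension `G(λ) = Σ_{k ≥ 0} Ĝ(k) λᵏ` of a matrix-valued function on the
circle to a point `λ` of the open unit disk. -/
def ext {m n : ℕ} (G : Circle → (Cn m →L[ℂ] Cn n)) (lam : ℂ) : Cn m →L[ℂ] Cn n :=
  ∑' k : ℕ, lam ^ k • fcM G (k : ℤ)

/-- The analytic extension `h(λ) = Σ_{k ≥ 0} ĥ(k) λᵏ` of a vector-valued function on the
circle to a point `λ` of the open unit disk. -/
def extV {n : ℕ} (h : Circle → Cn n) (lam : ℂ) : Cn n :=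
  ∑' k : ℕ, lam ^ k • fc h (k : ℤ)

/-- The orthogonal projection of `ℂⁿ` onto a subspace `N`, as an endomorphism of `ℂⁿ`. -/
def projOn {n : ℕ} (N : Submodule ℂ (Cn n)) : Cn n →L[ℂ] Cn n :=
  N.subtypeL.comp (N.orthogonalProjection)

/-- A bounded operator `p` on a Hilbert space is an orthogonal projection iff it is
idempotent and self-adjoint. -/
def IsOrthoProj {E : Type*} [NormedAddCommGroup E] [InnerProductSpace ℂ E] [CompleteSpace E]
    (p : E →L[ℂ] E) : Prop :=
  p.comp p = p ∧ ContinuousLinearMap.adjoint p = p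

/-- `H²(N)` for a subspace `N ⊆ ℂⁿ`: those `f ∈ H²(ℂⁿ)` with `f(z) ∈ N` for a.e. `z`. -/
def H2N {n : ℕ} (N : Submodule ℂ (Cn n)) : Set (L2 n) :=
  {f | f ∈ H2 n ∧ ∀ᵐ z ∂μc, (f : Circle → Cn n) z ∈ N}

abbrev ee : AddCircle (2 * Real.pi) → Circle := AddCircle.homeomorphCircle'

lemma ee_measurable : Measurable ee := (AddCircle.homeomorphCircle').continuous.measurable

instance : IsProbabilityMeasure μc :=
  Measure.isProbabilityMeasure_map ee_measurable.aemeasurable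

lemma fourier_eq_ee (k : ℤ) (t : AddCircle (2 * Real.pi)) :
    fourier k t = ((ee t : ℂ)) ^ k := by
  induction t using QuotientAddGroup.induction_on with
  | H x =>
    rw [fourier_coe_apply]
    show _ = ((AddCircle.homeomorphCircle' (x : AddCircle (2*Real.pi)) : ℂ)) ^ k
    rw [AddCircle.homeomorphCircle'_apply_mk, Circle.coe_exp, ← Complex.exp_int_mul]
    congr 1
    have h2 : (2 * Real.pi : ℂ) ≠ 0 := by
      simp [Real.pi_ne_zero, Complex.ofReal_ne_zero]
    push_cast
    field_simp

lemma conj_pow_eq (k : ℤ) (z : Circle) :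
    ((starRingEnd ℂ) (z : ℂ)) ^ k = (z : ℂ) ^ (-k) := by
  rw [← Circle.coe_inv_eq_conj, Circle.coe_inv, inv_zpow, ← zpow_neg]

section Transfer

variable {E : Type} [NormedAddCommGroup E] [NormedSpace ℂ E] [CompleteSpace E]

lemma continuous_conj_pow (k : ℤ) :
    Continuous fun z : Circle => ((starRingEnd ℂ) (z : ℂ)) ^ k := by
  have : ∀ z : Circle, ((starRingEnd ℂ) (z : ℂ)) ^ k = ((z ^ (-k) : Circle) : ℂ) := by
    intro z
    rw [conj_pow_eq]
    norm_cast
  simp_rw [this]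
  exact continuous_subtype_val.comp (continuous_zpow (-k))

lemma norm_conj_pow (k : ℤ) (z : Circle) : ‖((starRingEnd ℂ) (z : ℂ)) ^ k‖ = 1 := by
  rw [conj_pow_eq]
  have : ((z:ℂ)) ^ (-k) = ((z ^ (-k) : Circle) : ℂ) := by norm_cast
  rw [this]
  exact Circle.norm_coe _

lemma integral_μc (F : Circle → E) (hF : AEStronglyMeasurable F μc) :
    ∫ z, F z ∂μc = ∫ t, F (ee t) ∂AddCircle.haarAddCircle :=
  integral_map ee_measurable.aemeasurable hF

lemma fcE_eq (f : Circle → E) (hf : AEStronglyMeasurable f μc) (k : ℤ) :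
    (∫ z, ((starRingEnd ℂ) (z : ℂ)) ^ k • f z ∂μc) = fourierCoeff (f ∘ ee) k := by
  rw [integral_μc (fun z => ((starRingEnd ℂ) (z : ℂ)) ^ k • f z) (((continuous_conj_pow k).aestronglyMeasurable).smul hf)]
  rw [fourierCoeff]
  congr 1
  funext t
  rw [fourier_eq_ee, conj_pow_eq]
  norm_num

lemma ae_μc_iff {p : Circle → Prop} :
    (∀ᵐ z ∂μc, p z) ↔ ∀ᵐ t ∂AddCircle.haarAddCircle, p (ee t) := by
  have h := MeasurableEquiv.map_ae
    (AddCircle.homeomorphCircle'.toMeasurableEquiv) AddCircle.haarAddCircle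
  have hμ : ae μc = Filter.map ee (ae AddCircle.haarAddCircle) := by
    rw [show ae μc = ae (Measure.map (⇑AddCircle.homeomorphCircle'.toMeasurableEquiv)
      AddCircle.haarAddCircle) from rfl, ← h]
    rfl
  rw [Filter.Eventually, hμ, Filter.mem_map]
  rfl


lemma ae_zero_of_fcE_zero (g : Circle → ℂ) (hg : MemLp g 2 μc)
    (h : ∀ k : ℤ, (∫ z, ((starRingEnd ℂ) (z : ℂ)) ^ k • g z ∂μc) = 0) :
    ∀ᵐ z ∂μc, g z = 0 := by
  have hmp : MeasurePreserving ee AddCircle.haarAddCircle μc := ⟨ee_measurable, rfl⟩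
  have hG : MemLp (g ∘ ee) 2 AddCircle.haarAddCircle := hg.comp_measurePreserving hmp
  have hfc : ∀ k : ℤ, fourierCoeff (g ∘ ee) k = 0 := fun k => by
    rw [← fcE_eq g hg.aestronglyMeasurable k]; exact h k
  set G : Lp ℂ 2 AddCircle.haarAddCircle := hG.toLp (g ∘ ee) with hGdef
  have hcoe : (G : AddCircle (2 * Real.pi) → ℂ) =ᵐ[AddCircle.haarAddCircle] g ∘ ee :=
    hG.coeFn_toLp
  have hfcG : ∀ k : ℤ, fourierCoeff (G : AddCircle (2 * Real.pi) → ℂ) k = 0 := by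
    intro k
    have : fourierCoeff (G : AddCircle (2 * Real.pi) → ℂ) k = fourierCoeff (g ∘ ee) k := by
      unfold fourierCoeff
      exact integral_congr_ae (hcoe.mono fun t ht => by simp only [ht])
    rw [this]; exact hfc k
  have hG0 : G = 0 := by
    have : fourierBasis.repr G = 0 := by
      ext k
      rw [fourierBasis_repr]
      simpa using hfcG k
    simpa using (fourierBasis.repr).map_eq_zero_iff.mp this
  have : g ∘ ee =ᵐ[AddCircle.haarAddCircle] 0 :=
    (hG.toLp_eq_toLp_iff (MemLp.zero (p := 2) (μ := AddCircle.haarAddCircle))).mp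
      (by rw [← hGdef, hG0, MemLp.toLp_zero])
  rw [ae_μc_iff]
  exact this

end Transfer

section Delta

lemma memℒp2_of_bound {E : Type*} [NormedAddCommGroup E] (F : Circle → E)
    (hm : AEStronglyMeasurable F μc) (C : ℝ) (h : ∀ᵐ z ∂μc, ‖F z‖ ≤ C) :
    MemLp F 2 μc :=
  (memLp_top_of_bound hm C h).mono_exponent le_top

lemma integrable_of_bound {E : Type*} [NormedAddCommGroup E] (F : Circle → E)
    (hm : AEStronglyMeasurable F μc) (C : ℝ) (h : ∀ᵐ z ∂μc, ‖F z‖ ≤ C) :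
    Integrable F μc :=
  memLp_one_iff_integrable.mp ((memLp_top_of_bound hm C h).mono_exponent le_top)

lemma integral_fourier_eq_zero {m : ℤ} (hm : m ≠ 0) :
    ∫ t, fourier m t ∂(@AddCircle.haarAddCircle (2 * Real.pi) _) = 0 := by
  have ho := @orthonormal_fourier (2 * Real.pi) _
  have h0 : (inner (𝕜 := ℂ) (fourierLp (T := 2 * Real.pi) 2 0) (fourierLp 2 m)) = 0 :=
    ho.2 (show (0 : ℤ) ≠ m from fun h => hm h.symm)
  rw [MeasureTheory.L2.inner_def] at h0
  rw [← h0]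
  apply integral_congr_ae
  filter_upwards [coeFn_fourierLp 2 0 (T := 2 * Real.pi), coeFn_fourierLp 2 m (T := 2 * Real.pi)]
    with t h1 h2
  simp only [RCLike.inner_apply]
  rw [h1, h2]
  simp [fourier_zero]

lemma integral_conj_pow (k : ℤ) :
    (∫ z, ((starRingEnd ℂ) (z : ℂ)) ^ k ∂μc) = if k = 0 then 1 else 0 := by
  rcases eq_or_ne k 0 with rfl | hk
  · simp
  · rw [if_neg hk]
    have h := fcE_eq (fun _ => (1 : ℂ)) aestronglyMeasurable_const k
    simp only [smul_eq_mul, mul_one] at h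
    rw [h, fourierCoeff]
    have : ∀ t : AddCircle (2 * Real.pi), fourier (-k) t • ((fun _ => (1:ℂ)) ∘ ee) t
        = fourier (-k) t := by intro t; simp
    simp_rw [this]
    exact integral_fourier_eq_zero (neg_ne_zero.mpr hk)

end Delta

open scoped InnerProductSpace

section OpAlg

variable {n : ℕ} {M : Submodule ℂ (Cn n)}

lemma projOn_apply_mem (x : Cn n) : projOn M x ∈ M := (M.orthogonalProjection x).2

lemma projOn_eq_self {x : Cn n} (hx : x ∈ M) : projOn M x = x := by
  simp [projOn, hx,
    Submodule.orthogonalProjection_mem_subspace_eq_self ⟨x, hx⟩]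

lemma projOn_adjoint : ContinuousLinearMap.adjoint (projOn M) = projOn M :=
  (isSelfAdjoint_starProjection M)

variable {A : Cn n →L[ℂ] Cn n} (hA : (ContinuousLinearMap.adjoint A).comp A = projOn M)

include hA

lemma pi_cancel {u : Cn n} (hu : u ∈ M) : ContinuousLinearMap.adjoint A (A u) = u := by
  have h := DFunLike.congr_fun hA u
  rw [ContinuousLinearMap.comp_apply] at h
  rw [h, projOn_eq_self hu]

lemma pi_kernel (x : Cn n) : A (projOn M x) = A x := by
  have hz : A (x - projOn M x) = 0 := by
    have h1 : ⟪A (x - projOn M x), A (x - projOn M x)⟫_ℂ = 0 := by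
      rw [← ContinuousLinearMap.adjoint_inner_left]
      have : (ContinuousLinearMap.adjoint A) (A (x - projOn M x))
          = projOn M (x - projOn M x) := by
        have h := DFunLike.congr_fun hA (x - projOn M x)
        rwa [ContinuousLinearMap.comp_apply] at h
      rw [this]
      have : projOn M (x - projOn M x) = 0 := by
        rw [map_sub, projOn_eq_self (projOn_apply_mem x), sub_self]
      rw [this, inner_zero_left]
    exact inner_self_eq_zero.mp h1
  rw [map_sub] at hz
  exact (sub_eq_zero.mp hz).symm
end OpAlg

section FcHelp

variable {n : ℕ}

lemma fc_congr {f g : Circle → Cn n} (h : f =ᵐ[μc] g) (k : ℤ) : fc f k = fc g k :=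
  integral_congr_ae (h.mono fun z hz => by simp only [hz])

lemma memℒp_smul_conj_pow {E : Type*} [NormedAddCommGroup E] [NormedSpace ℂ E] (k : ℤ)
    {f : Circle → E} (hf : MemLp f 2 μc) :
    MemLp (fun z : Circle => ((starRingEnd ℂ) (z : ℂ)) ^ k • f z) 2 μc :=
  MemLp.of_le hf ((continuous_conj_pow k).aestronglyMeasurable.smul hf.1)
    (Filter.Eventually.of_forall fun z => by rw [norm_smul, norm_conj_pow, one_mul])

lemma integrable2 {E : Type*} [NormedAddCommGroup E] {f : Circle → E} (hf : MemLp f 2 μc) :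
    Integrable f μc :=
  memLp_one_iff_integrable.mp (hf.mono_exponent (by norm_num))

lemma ae_eq_const_of_fc (f : Circle → Cn n) (hf : MemLp f 2 μc)
    (h : ∀ k : ℤ, k ≠ 0 → fc f k = 0) : f =ᵐ[μc] fun _ => fc f 0 := by
  set c := fc f 0 with hc
  have key : ∀ i : Fin n, ∀ᵐ z ∂μc, (EuclideanSpace.proj i : Cn n →L[ℂ] ℂ) (f z) - c i = 0 := by
    intro i
    set L : Cn n →L[ℂ] ℂ := EuclideanSpace.proj i with hL
    apply ae_zero_of_fcE_zero (fun z => L (f z) - c i)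
      ((L.comp_memLp' hf).sub (memLp_const (c i)))
    intro k
    have hint : Integrable (fun z : Circle => ((starRingEnd ℂ) (z : ℂ)) ^ k • f z) μc :=
      integrable2 (memℒp_smul_conj_pow k hf)
    have h1 : (∫ z, ((starRingEnd ℂ) (z : ℂ)) ^ k • L (f z) ∂μc) = L (fc f k) := by
      calc (∫ z, ((starRingEnd ℂ) (z : ℂ)) ^ k • L (f z) ∂μc)
          = ∫ z, L (((starRingEnd ℂ) (z : ℂ)) ^ k • f z) ∂μc := by simp [_root_.map_smul]
        _ = L (fc f k) := (ContinuousLinearMap.integral_comp_comm L hint).symm ▸ rfl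
    have h2 : (∫ z, ((starRingEnd ℂ) (z : ℂ)) ^ k • (c i) ∂μc)
        = (if k = 0 then (1:ℂ) else 0) * c i := by
      rw [integral_smul_const, integral_conj_pow k, smul_eq_mul]
    have hsplit : (∫ z, ((starRingEnd ℂ) (z : ℂ)) ^ k • (L (f z) - c i) ∂μc)
        = (∫ z, ((starRingEnd ℂ) (z : ℂ)) ^ k • L (f z) ∂μc)
          - ∫ z, ((starRingEnd ℂ) (z : ℂ)) ^ k • (c i) ∂μc := by
      rw [← integral_sub (L.integrable_comp hint |>.congr ?_) ?_]
      · apply integral_congr_ae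
        filter_upwards with z
        rw [smul_sub]
      · filter_upwards with z
        simp [_root_.map_smul]
      · exact (integrable_of_bound _ (continuous_conj_pow k).aestronglyMeasurable 1
          (Filter.Eventually.of_forall fun z => le_of_eq (norm_conj_pow k z))).smul_const (c i)
    rcases eq_or_ne k 0 with rfl | hk
    · rw [hsplit, h1, h2, ← hc]
      simp [hL]
    · rw [hsplit, h1, h2, h k hk]
      simp [hk]
  have := (MeasureTheory.ae_all_iff).mpr key
  filter_upwards [this] with z hz
  ext i
  have := hz i
  rw [sub_eq_zero] at this
  simpa using this
end FcHelp

set_option synthInstance.maxHeartbeats 1000000 in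
lemma csc (n : ℕ) : SecondCountableTopology (Cn n →L[ℂ] Cn n) := inferInstance

section Rep

variable {n : ℕ}

lemma const_mem_H2N {N₁ : Submodule ℂ (Cn n)} {x : Cn n} (hx : x ∈ N₁) :
    ((memLp_const (μ := μc) (p := 2) x).toLp _ : L2 n) ∈ H2N N₁ := by
  have hcoe := (memLp_const (μ := μc) (p := 2) x).coeFn_toLp
  constructor
  · intro k hk
    rw [show fc (((memLp_const (μ := μc) (p := 2) x).toLp _ : L2 n) : Circle → Cn n) k
        = fc (fun _ => x) k from fc_congr hcoe k]
    unfold fc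
    rw [integral_smul_const, integral_conj_pow k, if_neg (by omega), zero_smul]
  · filter_upwards [hcoe] with z hz
    rw [hz]
    exact hx

lemma exists_rep {N N₁ : Submodule ℂ (Cn n)} {V V₁ : Circle → (Cn n →L[ℂ] Cn n)}
    (hV₁ : Measurable V₁) (hV₁b : ∃ C : ℝ, ∀ᵐ z ∂μc, ‖V₁ z‖ ≤ C)
    (hsub : mulSet V₁ (H2N N₁) ⊆ mulSet V (H2N N)) {x : Cn n} (hx : x ∈ N₁) :
    ∃ f : L2 n, f ∈ H2N N ∧
      ((fun z => V₁ z x) =ᵐ[μc] fun z => V z ((f : Circle → Cn n) z)) := by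
  obtain ⟨C, hC⟩ := hV₁b
  have hmeas : AEStronglyMeasurable (fun z => V₁ z x) μc := by
    haveI := csc n
    exact (ContinuousLinearMap.apply ℂ (Cn n) x).continuous.comp_aestronglyMeasurable
      hV₁.aestronglyMeasurable
  have hm2 : MemLp (fun z => V₁ z x) 2 μc := by
    apply memℒp2_of_bound _ hmeas (C * ‖x‖)
    filter_upwards [hC] with z hz
    exact le_trans ((V₁ z).le_opNorm x) (mul_le_mul_of_nonneg_right hz (norm_nonneg x))
  have hmem : (hm2.toLp _ : L2 n) ∈ mulSet V₁ (H2N N₁) := by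
    refine ⟨(memLp_const (μ := μc) (p := 2) x).toLp _, const_mem_H2N hx, ?_⟩
    filter_upwards [hm2.coeFn_toLp, (memLp_const (μ := μc) (p := 2) x).coeFn_toLp]
      with z h1 h2
    rw [h1, h2]
  obtain ⟨f, hf, hfe⟩ := hsub hmem
  exact ⟨f, hf, hm2.coeFn_toLp.symm.trans hfe⟩

end Rep

open scoped InnerProductSpace

set_option maxHeartbeats 2000000

/-- **Uniqueness in the generalized Beurling theorem.** If `V, V₁` are measurable
essentially bounded matrix-valued functions which are a.e. partial isometries with initial
spaces `N, N₁` respectively, and `V·H²(N) = V₁·H²(N₁)`, then `V₁ = V·W` a.e. for some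
constant partial isometry `W` with initial space `N₁` and final space `N`. -/
theorem beurling_generalized_uniqueness {n : ℕ} (N N₁ : Submodule ℂ (Cn n))
    (V V₁ : Circle → (Cn n →L[ℂ] Cn n)) (hV : Measurable V) (hV₁ : Measurable V₁)
    (hVb : ∃ C : ℝ, ∀ᵐ z ∂μc, ‖V z‖ ≤ C) (hV₁b : ∃ C : ℝ, ∀ᵐ z ∂μc, ‖V₁ z‖ ≤ C)
    (hVp : ∀ᵐ z ∂μc, (ContinuousLinearMap.adjoint (V z)).comp (V z) = projOn N)
    (hV₁p : ∀ᵐ z ∂μc, (ContinuousLinearMap.adjoint (V₁ z)).comp (V₁ z) = projOn N₁)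
    (heq : mulSet V (H2N N) = mulSet V₁ (H2N N₁)) :
    ∃ W : Cn n →L[ℂ] Cn n,
      (ContinuousLinearMap.adjoint W).comp W = projOn N₁ ∧
      W.comp (ContinuousLinearMap.adjoint W) = projOn N ∧
      ∀ᵐ z ∂μc, V₁ z = (V z).comp W := by
  classical
  set B := (EuclideanSpace.basisFun (Fin n) ℂ).toBasis with hB
  set x' : Fin n → Cn n := fun j => projOn N₁ (B j) with hx'
  set y' : Fin n → Cn n := fun j => projOn N (B j) with hy'
  -- Direction 1 representatives (for the basis, projected to N₁)
  have hD1 : ∀ j : Fin n, ∃ f : L2 n, f ∈ H2N N ∧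
      ((fun z => V₁ z (x' j)) =ᵐ[μc] fun z => V z ((f : Circle → Cn n) z)) :=
    fun j => exists_rep hV₁ hV₁b (le_of_eq heq.symm) (projOn_apply_mem _)
  choose f hfH hfrep using hD1
  -- Direction 2 representatives, for arbitrary y ∈ N
  have hD2 : ∀ y : Cn n, y ∈ N → ∃ g : L2 n, g ∈ H2N N₁ ∧
      ((fun z => V z y) =ᵐ[μc] fun z => V₁ z ((g : Circle → Cn n) z)) :=
    fun y hy => exists_rep hV hVb (le_of_eq heq) hy
  -- Positive Fourier coefficients of f j vanish
  have hfc_pos : ∀ j : Fin n, ∀ k : ℤ, 0 < k → fc (⇑(f j) : Circle → Cn n) k = 0 := by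
    intro j k hk
    set F : Circle → Cn n := ⇑(f j) with hF
    have hI1 : Integrable (fun z : Circle => ((starRingEnd ℂ) (z : ℂ)) ^ k • F z) μc :=
      integrable2 (memℒp_smul_conj_pow k (Lp.memLp (f j)))
    have hPfc : projOn N (fc F k) = fc F k := by
      have h1 : fc F k = fc (fun z => projOn N (F z)) k :=
        fc_congr ((hfH j).2.mono fun z hz => (projOn_eq_self hz).symm) k
      have h2 : fc (fun z => projOn N (F z)) k = projOn N (fc F k) :=
        calc fc (fun z => projOn N (F z)) k
            = ∫ z, projOn N (((starRingEnd ℂ) (z : ℂ)) ^ k • F z) ∂μc := by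
              unfold fc; congr 1; funext z; rw [_root_.map_smul]
          _ = projOn N (fc F k) := by
              rw [ContinuousLinearMap.integral_comp_comm (projOn N) hI1]; rfl
      rw [← h2]
      exact h1.symm
    have hy0 : ∀ y : Cn n, y ∈ N → (⟪y, fc F k⟫_ℂ) = 0 := by
      intro y hy
      obtain ⟨g, hgH, hgrep⟩ := hD2 y hy
      set G : Circle → Cn n := ⇑g with hG
      have hI2 : Integrable (fun z : Circle => ((starRingEnd ℂ) (z : ℂ)) ^ (-k) • G z) μc :=
        integrable2 (memℒp_smul_conj_pow (-k) (Lp.memLp g))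
      have e2 : (fun z : Circle => (innerSL ℂ y) (((starRingEnd ℂ) (z : ℂ)) ^ k • F z))
          =ᵐ[μc] (fun z : Circle =>
            (starRingEnd ℂ) ((innerSL ℂ (x' j)) (((starRingEnd ℂ) (z : ℂ)) ^ (-k) • G z))) := by
        filter_upwards [hVp, hV₁p, hfrep j, hgrep, (hfH j).2, hgH.2]
          with z h1 h2 h3 h4 h5 h6
        have i1 : (⟪y, F z⟫_ℂ) = ⟪G z, x' j⟫_ℂ := by
          calc (⟪y, F z⟫_ℂ)
              = ⟪y, (ContinuousLinearMap.adjoint (V z)) (V z (F z))⟫_ℂ := by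
                rw [pi_cancel h1 h5]
            _ = ⟪V z y, V z (F z)⟫_ℂ := ContinuousLinearMap.adjoint_inner_right _ _ _
            _ = ⟪V₁ z (G z), V₁ z (x' j)⟫_ℂ := by rw [← h3, h4]
            _ = ⟪(ContinuousLinearMap.adjoint (V₁ z)) (V₁ z (G z)), x' j⟫_ℂ :=
                (ContinuousLinearMap.adjoint_inner_left _ _ _).symm
            _ = ⟪G z, x' j⟫_ℂ := by rw [pi_cancel h2 h6]
        simp only [innerSL_apply_apply, inner_smul_right]
        rw [i1, ← inner_conj_symm (x' j) (G z)]
        rw [map_mul, map_zpow₀, Complex.conj_conj, Complex.conj_conj, conj_pow_eq]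
      calc (⟪y, fc F k⟫_ℂ)
          = (innerSL ℂ y) (∫ z, ((starRingEnd ℂ) (z : ℂ)) ^ k • F z ∂μc) := rfl
        _ = ∫ z, (innerSL ℂ y) (((starRingEnd ℂ) (z : ℂ)) ^ k • F z) ∂μc :=
            (ContinuousLinearMap.integral_comp_comm _ hI1).symm
        _ = ∫ z, (starRingEnd ℂ)
              ((innerSL ℂ (x' j)) (((starRingEnd ℂ) (z : ℂ)) ^ (-k) • G z)) ∂μc :=
            integral_congr_ae e2
        _ = (starRingEnd ℂ)
              (∫ z, (innerSL ℂ (x' j)) (((starRingEnd ℂ) (z : ℂ)) ^ (-k) • G z) ∂μc) :=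
            integral_conj
        _ = (starRingEnd ℂ) ((innerSL ℂ (x' j)) (fc G (-k))) := by
            rw [ContinuousLinearMap.integral_comp_comm _ hI2]; rfl
        _ = 0 := by rw [hgH.1 (-k) (by omega)]; simp
    have hfin := hy0 (projOn N (fc F k)) (projOn_apply_mem _)
    rw [hPfc] at hfin
    exact inner_self_eq_zero.mp hfin
  -- constancy
  set c : Fin n → Cn n := fun j => fc (⇑(f j) : Circle → Cn n) 0 with hcdef
  have hconst : ∀ j : Fin n, (⇑(f j) : Circle → Cn n) =ᵐ[μc] fun _ => c j := by
    intro j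
    apply ae_eq_const_of_fc _ (Lp.memLp (f j))
    intro k hk
    rcases lt_or_gt_of_ne hk with h | h
    · exact (hfH j).1 k h
    · exact hfc_pos j k h
  -- the constant operator
  set W₀ : Cn n →L[ℂ] Cn n := LinearMap.toContinuousLinearMap (B.constr ℂ c) with hW₀def
  have hW₀B : ∀ j, W₀ (B j) = c j := by
    intro j
    show (B.constr ℂ c) (B j) = c j
    exact B.constr_basis ℂ c j
  -- direction-2 representatives for the basis
  have hD2' : ∀ j : Fin n, ∃ g : L2 n, g ∈ H2N N₁ ∧
      ((fun z => V z (y' j)) =ᵐ[μc] fun z => V₁ z ((g : Circle → Cn n) z)) :=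
    fun j => hD2 (y' j) (projOn_apply_mem _)
  choose g hgH hgrep using hD2'
  -- master a.e. set
  have master : ∀ᵐ z ∂μc,
      ((ContinuousLinearMap.adjoint (V z)).comp (V z) = projOn N) ∧
      ((ContinuousLinearMap.adjoint (V₁ z)).comp (V₁ z) = projOn N₁) ∧
      (∀ j, V₁ z (x' j) = V z ((f j : Circle → Cn n) z)) ∧
      (∀ j, (f j : Circle → Cn n) z = c j) ∧
      (∀ j, (f j : Circle → Cn n) z ∈ N) ∧
      (∀ j, V z (y' j) = V₁ z ((g j : Circle → Cn n) z)) ∧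
      (∀ j, (g j : Circle → Cn n) z ∈ N₁) := by
    filter_upwards [hVp, hV₁p, MeasureTheory.ae_all_iff.mpr hfrep,
      MeasureTheory.ae_all_iff.mpr hconst, MeasureTheory.ae_all_iff.mpr (fun j => (hfH j).2),
      MeasureTheory.ae_all_iff.mpr hgrep, MeasureTheory.ae_all_iff.mpr (fun j => (hgH j).2)]
      with z h1 h2 h3 h4 h5 h6 h7
    exact ⟨h1, h2, h3, h4, h5, h6, h7⟩
  -- pointwise consequence: W₀ agrees with (V z)† ∘ V₁ z, etc.
  have key : ∀ z : Circle,
      ((ContinuousLinearMap.adjoint (V z)).comp (V z) = projOn N) →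
      ((ContinuousLinearMap.adjoint (V₁ z)).comp (V₁ z) = projOn N₁) →
      (∀ j, V₁ z (x' j) = V z ((f j : Circle → Cn n) z)) →
      (∀ j, (f j : Circle → Cn n) z = c j) →
      (∀ j, (f j : Circle → Cn n) z ∈ N) →
      V₁ z = (V z).comp W₀ := by
    intro z h1 h2 h3 h4 h5
    apply ContinuousLinearMap.coe_injective
    apply B.ext
    intro j
    show V₁ z (B j) = ((V z).comp W₀) (B j)
    rw [ContinuousLinearMap.comp_apply, hW₀B j, ← h4 j, ← h3 j, ← pi_kernel h2 (B j)]
  have hne : (MeasureTheory.ae μc).NeBot := by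
    rw [MeasureTheory.ae_neBot]
    exact IsProbabilityMeasure.ne_zero μc
  obtain ⟨z₀, hz₀⟩ := master.exists
  obtain ⟨h1, h2, h3, h4, h5, h6, h7⟩ := hz₀
  set A : Cn n →L[ℂ] Cn n := V z₀ with hA
  set A₁ : Cn n →L[ℂ] Cn n := V₁ z₀ with hA₁
  have hPA : ∀ u, ContinuousLinearMap.adjoint A (A u) = projOn N u := fun u => by
    have := DFunLike.congr_fun h1 u
    rwa [ContinuousLinearMap.comp_apply] at this
  have hPA₁ : ∀ u, ContinuousLinearMap.adjoint A₁ (A₁ u) = projOn N₁ u := fun u => by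
    have := DFunLike.congr_fun h2 u
    rwa [ContinuousLinearMap.comp_apply] at this
  have hWz : W₀ = (ContinuousLinearMap.adjoint A).comp A₁ := by
    apply ContinuousLinearMap.coe_injective
    apply B.ext
    intro j
    show W₀ (B j) = ((ContinuousLinearMap.adjoint A).comp A₁) (B j)
    rw [ContinuousLinearMap.comp_apply]
    calc W₀ (B j) = c j := hW₀B j
      _ = (f j : Circle → Cn n) z₀ := (h4 j).symm
      _ = ContinuousLinearMap.adjoint A (A ((f j : Circle → Cn n) z₀)) :=
          (pi_cancel h1 (h5 j)).symm
      _ = ContinuousLinearMap.adjoint A (A₁ (x' j)) := by rw [← h3 j]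
      _ = ContinuousLinearMap.adjoint A (A₁ (B j)) := by
          rw [show x' j = projOn N₁ (B j) from rfl, pi_kernel h2 (B j)]
  have hWadj : ContinuousLinearMap.adjoint W₀ = (ContinuousLinearMap.adjoint A₁).comp A := by
    rw [hWz, ContinuousLinearMap.adjoint_comp, ContinuousLinearMap.adjoint_adjoint]
  refine ⟨W₀, ?_, ?_, ?_⟩
  · -- W₀† W₀ = projOn N₁
    apply ContinuousLinearMap.coe_injective
    apply B.ext
    intro j
    show (ContinuousLinearMap.adjoint W₀).comp W₀ (B j) = projOn N₁ (B j)
    rw [ContinuousLinearMap.comp_apply, hWz, ContinuousLinearMap.adjoint_comp,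
      ContinuousLinearMap.adjoint_adjoint]
    rw [ContinuousLinearMap.comp_apply, ContinuousLinearMap.comp_apply]
    have hstep : A (ContinuousLinearMap.adjoint A (A₁ (B j))) = A₁ (B j) := by
      have hAB : A₁ (B j) = A ((f j : Circle → Cn n) z₀) := by
        rw [← pi_kernel h2 (B j), show projOn N₁ (B j) = x' j from rfl, h3 j]
      rw [hAB, pi_cancel h1 (h5 j)]
    rw [hstep, hPA₁]
  · -- W₀ W₀† = projOn N
    apply ContinuousLinearMap.coe_injective
    apply B.ext
    intro j
    show W₀.comp (ContinuousLinearMap.adjoint W₀) (B j) = projOn N (B j)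
    rw [ContinuousLinearMap.comp_apply, hWz, ContinuousLinearMap.adjoint_comp,
      ContinuousLinearMap.adjoint_adjoint]
    rw [ContinuousLinearMap.comp_apply, ContinuousLinearMap.comp_apply]
    have hAB : A (B j) = A₁ ((g j : Circle → Cn n) z₀) := by
      rw [← pi_kernel h1 (B j), show projOn N (B j) = y' j from rfl, h6 j]
    have hstep : A₁ (ContinuousLinearMap.adjoint A₁ (A (B j))) = A (B j) := by
      rw [hAB, pi_cancel h2 (h7 j)]
    rw [hstep, hPA]
  · filter_upwards [master] with z hz
    exact key z hz.1 hz.2.1 hz.2.2.1 hz.2.2.2.1 hz.2.2.2.2.1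
end
end

section
/- Let n be a positive integer and let {p_t}_{t∈[0,1]} be a family of orthogonal projections on H²(ℂⁿ) such that: (i) t ↦ p_t is continuous in operator norm, and (ii) for every t ∈ [0,1] the range p_t H²(ℂⁿ) is invariant under the unilateral shift S. For each t let W_t := (p_t H²(ℂⁿ)) ∩ (S(p_t H²(ℂⁿ)))⊥ be the wandering subspace of the invariant subspace p_t H²(ℂⁿ). Then the function t ↦ dim_ℂ W_t is constant on [0,1]. -/
open MeasureTheory Complex ContinuousLinearMap
open scoped ComplexConjugate ENNReal NNReal

noncomputable section

/-- The wandering subspace `M ∩ (S M)ᗮ` of a subspace `M` (given as a subset that is in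
fact a subspace, we pass to spans, which does not change anything for subspaces). -/
def wander {n : ℕ} (M : Set (L2 n)) : Submodule ℂ (L2 n) :=
  Submodule.span ℂ M ⊓ (Submodule.span ℂ (Sset M))ᗮ


/-! ### Auxiliary material for the proof -/

set_option maxHeartbeats 1000000

section AbstractHilbert

variable {E : Type*} [NormedAddCommGroup E] [InnerProductSpace ℂ E] [CompleteSpace E]

local notation "⟪" x ", " y "⟫" => @inner ℂ _ _ x y

/-- If `T` is an isometric CLM then `T† ∘ T = id`. -/
theorem WDC.adj_comp_self {T : E →L[ℂ] E} (hT : ∀ x, ‖T x‖ = ‖x‖) (x : E) :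
    adjoint T (T x) = x := by
  have hi : ∀ x y : E, ⟪T x, T y⟫ = ⟪x, y⟫ := by
    intro x y
    let f : E →ₗᵢ[ℂ] E := ⟨T.toLinearMap, hT⟩
    exact f.inner_map_map x y
  apply ext_inner_right ℂ
  intro y
  rw [adjoint_inner_left, hi]

theorem WDC.rank_ker_adj_le {T T' : E →L[ℂ] E} (hT : ∀ x, ‖T x‖ = ‖x‖)
    (hT' : ∀ x, ‖T' x‖ = ‖x‖) (hd : ‖T - T'‖ < 1) :
    Module.rank ℂ (LinearMap.ker (adjoint T : E →ₗ[ℂ] E)) ≤ Module.rank ℂ (LinearMap.ker (adjoint T' : E →ₗ[ℂ] E)) := by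
  set A := adjoint T
  set A' := adjoint T'
  have hmem : ∀ x : LinearMap.ker (A : E →ₗ[ℂ] E), (x : E) - T' (A' x) ∈ LinearMap.ker (A' : E →ₗ[ℂ] E) := by
    intro x
    simp only [LinearMap.mem_ker, map_sub, WDC.adj_comp_self hT']
    simp [A', WDC.adj_comp_self hT']
  let φ : LinearMap.ker (A : E →ₗ[ℂ] E) →ₗ[ℂ] LinearMap.ker (A' : E →ₗ[ℂ] E) :=
    { toFun := fun x => ⟨(x : E) - T' (A' x), hmem x⟩
      map_add' := by intro a b; ext; simp only [Submodule.coe_add, map_add]; abel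
      map_smul' := by intro c a; ext; simp [smul_sub] }
  have hinj : Function.Injective φ := by
    rw [← LinearMap.ker_eq_bot, LinearMap.ker_eq_bot']
    intro x hx
    have hx0 : (x : E) - T' (A' (x : E)) = (0 : E) := congrArg Subtype.val hx
    have hx' : (x : E) = T' (A' (x : E)) := by
      have := sub_eq_zero.mp hx0; exact this
    have hker : A (x : E) = 0 := x.2
    have h1 : ‖(x : E)‖ = ‖A' (x : E) - A (x : E)‖ := by
      rw [hker, sub_zero]
      calc ‖(x : E)‖ = ‖T' (A' (x : E))‖ := by rw [← hx']
        _ = ‖A' (x : E)‖ := hT' _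
    have h2 : ‖A' (x : E) - A (x : E)‖ ≤ ‖T - T'‖ * ‖(x : E)‖ := by
      have hb : ‖(A' - A) (x : E)‖ ≤ ‖A' - A‖ * ‖(x : E)‖ := le_opNorm _ _
      have hn : ‖A' - A‖ = ‖T - T'‖ := by
        have h1 : A' - A = adjoint (T' - T) := by simp [A, A', map_sub]
        rw [h1, LinearIsometryEquiv.norm_map, ← neg_sub T T', norm_neg]
      simpa [hn] using hb
    have : ‖(x : E)‖ ≤ ‖T - T'‖ * ‖(x : E)‖ := h1 ▸ h2
    have hx0' : ‖(x : E)‖ = 0 := by nlinarith [norm_nonneg (x : E)]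
    ext
    simpa using norm_eq_zero.mp hx0'
  exact LinearMap.rank_le_of_injective φ hinj

theorem WDC.rank_ker_adj_eq {T T' : E →L[ℂ] E} (hT : ∀ x, ‖T x‖ = ‖x‖)
    (hT' : ∀ x, ‖T' x‖ = ‖x‖) (hd : ‖T - T'‖ < 1) :
    Module.rank ℂ (LinearMap.ker (adjoint T : E →ₗ[ℂ] E)) = Module.rank ℂ (LinearMap.ker (adjoint T' : E →ₗ[ℂ] E)) :=
  le_antisymm (WDC.rank_ker_adj_le hT hT' hd)
    (WDC.rank_ker_adj_le hT' hT (by rwa [← norm_neg, neg_sub]))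

end AbstractHilbert

namespace WDC

variable {n : ℕ}

theorem memU (f : L2 n) :
    MemLp (fun z : Circle => (z : ℂ) • (f : Circle → Cn n) z) 2 μc := by
  haveI : OpensMeasurableSpace Circle := inferInstance
  have hc : Continuous (fun z : Circle => (z : ℂ)) := continuous_subtype_val
  have hm : AEStronglyMeasurable (fun z : Circle => (z : ℂ) • (f : Circle → Cn n) z) μc := by
    exact (hc.aestronglyMeasurable).smul (Lp.aestronglyMeasurable f)
  refine MemLp.of_le (Lp.memLp f) hm ?_
  filter_upwards with z
  rw [norm_smul, Circle.norm_coe, one_mul]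

theorem normU (f : L2 n) :
    eLpNorm (fun z : Circle => (z : ℂ) • (f : Circle → Cn n) z) 2 μc
      = eLpNorm (f : Circle → Cn n) 2 μc := by
  apply eLpNorm_congr_norm_ae
  filter_upwards with z
  rw [norm_smul, Circle.norm_coe, one_mul]

/-- The bilateral shift (multiplication by `z`) as a linear map on `L²(𝕋, ℂⁿ)`. -/
def U0 : L2 n →ₗ[ℂ] L2 n where
  toFun f := (memU f).toLp _
  map_add' f g := by
    rw [← MemLp.toLp_add (memU f) (memU g)]
    refine MemLp.toLp_congr _ _ ?_
    filter_upwards [Lp.coeFn_add f g] with z hz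
    rw [Pi.add_apply, hz, Pi.add_apply, smul_add]
  map_smul' c f := by
    rw [RingHom.id_apply, ← MemLp.toLp_const_smul c (memU f)]
    refine MemLp.toLp_congr (memU (c • f)) ((memU f).const_smul c) ?_
    filter_upwards [Lp.coeFn_smul c f] with z hz
    rw [Pi.smul_apply, hz, Pi.smul_apply, smul_comm]

theorem U0_norm (f : L2 n) : ‖(U0 f : L2 n)‖ = ‖f‖ := by
  have h : (U0 f : L2 n) = MemLp.toLp _ (memU f) := rfl
  rw [h, Lp.norm_toLp, Lp.norm_def, normU]

/-- The bilateral shift (multiplication by `z`) as a bounded operator on `L²(𝕋, ℂⁿ)`. -/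
def U : L2 n →L[ℂ] L2 n :=
  LinearMap.mkContinuous U0 1 (fun f => by rw [U0_norm]; simp)

theorem U_norm (f : L2 n) : ‖U f‖ = ‖f‖ := U0_norm f

theorem U_ae (f : L2 n) :
    (U f : Circle → Cn n) =ᵐ[μc] fun z => (z : ℂ) • (f : Circle → Cn n) z := by
  have h : U (n := n) f = MemLp.toLp _ (memU f) := rfl
  rw [h]
  exact MemLp.coeFn_toLp (memU f)

end WDC

/-- Given an operator-norm continuous family `{p_t}_{t ∈ [0,1]}` of orthogonal projections
of `H²(ℂⁿ)` whose ranges `p_t H²(ℂⁿ)` are invariant under the unilateral shift `S`, the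
dimension of the wandering subspace `W_t = (p_t H²(ℂⁿ)) ∩ (S (p_t H²(ℂⁿ)))ᗮ` is constant
in `t`. -/
theorem wandering_dimension_constant {n : ℕ} (hn : 0 < n)
    (p : Set.Icc (0 : ℝ) 1 → (L2 n →L[ℂ] L2 n))
    (hproj : ∀ t, IsOrthoProj (p t))
    (hrange : ∀ t, Set.range (p t) ⊆ H2 n)
    (hcont : Continuous p)
    (hinv : ∀ t, ShiftInv ((p t) '' H2 n)) :
    ∃ d : Cardinal, ∀ t, Module.rank ℂ (wander ((p t) '' H2 n)) = d := by
  classical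
  have hidem : ∀ t x, p t (p t x) = p t x := by
    intro t x
    have h := (hproj t).1
    calc p t (p t x) = ((p t).comp (p t)) x := rfl
      _ = p t x := by rw [h]
  have hsa : ∀ t (x y : L2 n), (inner ℂ (p t x) y) = inner ℂ x (p t y) := by
    intro t x y
    conv_lhs => rw [← (hproj t).2]
    exact ContinuousLinearMap.adjoint_inner_left (p t) y x
  have hM : ∀ t, p t '' H2 n = Set.range (p t) := by
    intro t
    apply Set.Subset.antisymm
    · rintro x ⟨f, -, rfl⟩; exact ⟨f, rfl⟩
    · rintro x ⟨y, rfl⟩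
      exact ⟨p t y, hrange t ⟨y, rfl⟩, hidem t y⟩
  have hUmem : ∀ t x, WDC.U (p t x) ∈ Set.range (p t) := by
    intro t x
    obtain ⟨g, hg, hge⟩ := hinv t (p t x) (by rw [hM]; exact ⟨x, rfl⟩)
    have he : WDC.U (p t x) = g := Lp.ext ((WDC.U_ae (p t x)).trans hge.symm)
    rw [he, ← hM]; exact hg
  have hfix : ∀ t x, x ∈ Set.range (p t) → p t x = x := by
    rintro t x ⟨y, rfl⟩; exact hidem t y
  set T : Set.Icc (0:ℝ) 1 → (L2 n →L[ℂ] L2 n) :=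
    fun t => WDC.U.comp (p t) + (ContinuousLinearMap.id ℂ (L2 n) - p t) with hT
  have hTapp : ∀ t x, T t x = WDC.U (p t x) + (x - p t x) := by
    intro t x
    simp [hT, ContinuousLinearMap.add_apply, ContinuousLinearMap.comp_apply,
      ContinuousLinearMap.sub_apply, ContinuousLinearMap.id_apply]
  have hp0 : ∀ t x, p t (x - p t x) = 0 := by
    intro t x; rw [map_sub, hidem]; simp
  have hTiso : ∀ t x, ‖T t x‖ = ‖x‖ := by
    intro t x
    have h1 : (inner ℂ (WDC.U (p t x)) (x - p t x)) = 0 := by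
      conv_lhs => rw [← hfix t _ (hUmem t x)]
      rw [hsa, hp0, inner_zero_right]
    have h2 : (inner ℂ (p t x) (x - p t x)) = 0 := by
      rw [hsa, hp0, inner_zero_right]
    have e1 := norm_add_sq_eq_norm_sq_add_norm_sq_of_inner_eq_zero _ _ h1
    have e2 := norm_add_sq_eq_norm_sq_add_norm_sq_of_inner_eq_zero _ _ h2
    have hx : p t x + (x - p t x) = x := by abel
    rw [hx] at e2
    have e3 : ‖T t x‖ * ‖T t x‖ = ‖x‖ * ‖x‖ := by
      rw [hTapp, e1, WDC.U_norm, ← e2]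
    nlinarith [norm_nonneg (T t x), norm_nonneg x]
  have hadj : ∀ t, ContinuousLinearMap.adjoint (T t)
      = (p t).comp (ContinuousLinearMap.adjoint WDC.U)
        + (ContinuousLinearMap.id ℂ (L2 n) - p t) := by
    intro t
    rw [hT]
    rw [map_add, ContinuousLinearMap.adjoint_comp, map_sub, ContinuousLinearMap.adjoint_id,
      (hproj t).2]
  have hker : ∀ t, wander (p t '' H2 n)
      = LinearMap.ker (ContinuousLinearMap.adjoint (T t) : L2 n →ₗ[ℂ] L2 n) := by
    intro t
    have hspan1 : Submodule.span ℂ (p t '' H2 n) = LinearMap.range (p t : L2 n →ₗ[ℂ] L2 n) := by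
      rw [hM, ← ContinuousLinearMap.coe_coe (p t), ← LinearMap.coe_range (p t : L2 n →ₗ[ℂ] L2 n), Submodule.span_eq]
    have hSset : Sset (p t '' H2 n) = ⇑WDC.U '' (Set.range ⇑(p t)) := by
      rw [hM]
      apply Set.Subset.antisymm
      · rintro g ⟨f, hf, hge⟩
        exact ⟨f, hf, (Lp.ext ((WDC.U_ae f).trans hge.symm) : WDC.U f = g)⟩
      · rintro g ⟨f, hf, rfl⟩
        exact ⟨f, hf, WDC.U_ae f⟩
    have hspan2 : Submodule.span ℂ (Sset (p t '' H2 n))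
        = Submodule.map (WDC.U (n := n) : L2 n →ₗ[ℂ] L2 n) (LinearMap.range (p t : L2 n →ₗ[ℂ] L2 n)) := by
      rw [hSset, ← ContinuousLinearMap.coe_coe (p t), ← LinearMap.coe_range (p t : L2 n →ₗ[ℂ] L2 n),
          ← ContinuousLinearMap.coe_coe (WDC.U (n := n)), Submodule.span_image, Submodule.span_eq]
    have hw : wander (p t '' H2 n)
        = LinearMap.range (p t : L2 n →ₗ[ℂ] L2 n) ⊓ (Submodule.map (WDC.U (n := n) : L2 n →ₗ[ℂ] L2 n) (LinearMap.range (p t : L2 n →ₗ[ℂ] L2 n)))ᗮ := by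
      unfold wander
      rw [hspan1, hspan2]
    rw [hw]
    ext x
    simp only [Submodule.mem_inf, LinearMap.mem_ker]
    constructor
    · rintro ⟨hxM, hxO⟩
      have hPA : p t (ContinuousLinearMap.adjoint WDC.U x) = 0 := by
        apply ext_inner_right ℂ
        intro v
        rw [inner_zero_left, hsa, ContinuousLinearMap.adjoint_inner_left]
        have hu : WDC.U (p t v) ∈ Submodule.map (WDC.U (n := n) : L2 n →ₗ[ℂ] L2 n) (LinearMap.range (p t : L2 n →ₗ[ℂ] L2 n)) :=
          Submodule.mem_map_of_mem (LinearMap.mem_range_self _ v)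
        exact inner_eq_zero_symm.mp ((Submodule.mem_orthogonal _ _).mp hxO _ hu)
      have hx : p t x = x := by
        obtain ⟨y, rfl⟩ := hxM; exact hidem t y
      rw [hadj t, ContinuousLinearMap.coe_coe, ContinuousLinearMap.add_apply, ContinuousLinearMap.comp_apply,
        ContinuousLinearMap.sub_apply, ContinuousLinearMap.id_apply, hPA, hx]
      simp
    · intro hx0
      rw [hadj t, ContinuousLinearMap.coe_coe, ContinuousLinearMap.add_apply, ContinuousLinearMap.comp_apply,
        ContinuousLinearMap.sub_apply, ContinuousLinearMap.id_apply] at hx0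
      have h1 : p t (ContinuousLinearMap.adjoint WDC.U x) = 0 := by
        have hc := congrArg (p t) hx0
        rw [map_add, map_sub, hidem, hidem, sub_self, add_zero, map_zero] at hc
        exact hc
      have h2 : p t x = x := by
        rw [h1, zero_add, sub_eq_zero] at hx0
        exact hx0.symm
      refine ⟨⟨x, h2⟩, ?_⟩
      rw [Submodule.mem_orthogonal]
      rintro u hu
      obtain ⟨m, hm, rfl⟩ := hu
      obtain ⟨y, rfl⟩ := hm
      rw [inner_eq_zero_symm, ContinuousLinearMap.coe_coe, ContinuousLinearMap.coe_coe,
        ← ContinuousLinearMap.adjoint_inner_left, ← hsa t _ y, h1,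
        inner_zero_left]
  have hTdiff : ∀ s t, ‖T s - T t‖ ≤ 2 * ‖p s - p t‖ := by
    intro s t
    have hEq : T s - T t = WDC.U.comp (p s - p t) - (p s - p t) := by
      refine ContinuousLinearMap.ext fun x => ?_
      simp only [hT, ContinuousLinearMap.sub_apply, ContinuousLinearMap.add_apply,
        ContinuousLinearMap.comp_apply, ContinuousLinearMap.id_apply, map_sub]
      abel
    rw [hEq]
    refine ContinuousLinearMap.opNorm_le_bound _ (by positivity) ?_
    intro x
    rw [ContinuousLinearMap.sub_apply, ContinuousLinearMap.comp_apply]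
    calc ‖WDC.U ((p s - p t) x) - (p s - p t) x‖
        ≤ ‖WDC.U ((p s - p t) x)‖ + ‖(p s - p t) x‖ := norm_sub_le _ _
      _ = ‖(p s - p t) x‖ + ‖(p s - p t) x‖ := by rw [WDC.U_norm]
      _ ≤ ‖p s - p t‖ * ‖x‖ + ‖p s - p t‖ * ‖x‖ := by
          have hb := (p s - p t).le_opNorm x; linarith
      _ = 2 * ‖p s - p t‖ * ‖x‖ := by ring
  set F : Set.Icc (0:ℝ) 1 → Cardinal :=
    fun t => Module.rank ℂ (wander (p t '' H2 n)) with hF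
  have hlc : IsLocallyConstant F := by
    rw [IsLocallyConstant.iff_exists_open]
    intro t
    refine ⟨{s | ‖p s - p t‖ < 1/2}, ?_, ?_, ?_⟩
    · have hco : Continuous fun s => ‖p s - p t‖ := (hcont.sub continuous_const).norm
      exact isOpen_lt hco continuous_const
    · show ‖p t - p t‖ < 1/2
      rw [sub_self, norm_zero]; norm_num
    · intro s hs
      have hs' : ‖p s - p t‖ < 1/2 := hs
      have hd : ‖T s - T t‖ < 1 := lt_of_le_of_lt (hTdiff s t) (by linarith)
      show Module.rank ℂ (wander (p s '' H2 n)) = Module.rank ℂ (wander (p t '' H2 n))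
      rw [hker s, hker t]
      exact WDC.rank_ker_adj_eq (hTiso s) (hTiso t) hd
  haveI : PreconnectedSpace (Set.Icc (0:ℝ) 1) := Subtype.preconnectedSpace isPreconnected_Icc
  refine ⟨F ⟨0, by norm_num⟩, fun t => ?_⟩
  exact hlc.apply_eq_of_preconnectedSpace t ⟨0, by norm_num⟩
end
end
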